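/- For every N ≥ 2, let a : Fin N → Bool be the alternating bit string a n = (n.val % 2 = 1) and a' its bitwise complement. The eigenspace of the Ising Hamiltonian H0 for the eigenvalue −(N − 1) (its smallest eigenvalue) is exactly the two-dimensional span of e a and e a': a vector v satisfies H0.mulVec v = (−(N−1)) • v if and only if v ∈ Submodule.span ℂ {e a, e a'}. -/

import Mathlib

open Matrix

/-- `Z n`: the Pauli-Z operator acting on site `n` of the chain. -/
noncomputable def Zop (N : ℕ) (n : Fin N) : Matrix (Fin N → Bool) (Fin N → Bool) ℂ :=
  Matrix.diagonal fun s => if s n = false then 1 else -1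

/-- The nearest-neighbour Ising Hamiltonian `H0 = ∑_{n=0}^{N-2} Z_n Z_{n+1}`. -/
noncomputable def IsingH0 (N : ℕ) : Matrix (Fin N → Bool) (Fin N → Bool) ℂ :=
  ∑ n ∈ (Finset.range (N - 1)).attach,
    Zop N ⟨n.1, by have := Finset.mem_range.mp n.2; omega⟩ *
    Zop N ⟨n.1 + 1, by have := Finset.mem_range.mp n.2; omega⟩

/-- The standard basis vector at the bit string `s`. -/
noncomputable def e {N : ℕ} (s : Fin N → Bool) : (Fin N → Bool) → ℂ :=
  Pi.single s 1

/-- The alternating (Néel) bit string `a n = (n % 2 = 1)`, i.e. `0101⋯`. -/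
def alt (N : ℕ) : Fin N → Bool := fun n => decide (n.val % 2 = 1)

noncomputable def dval (N : ℕ) (s : Fin N → Bool) : ℂ :=
  ∑ n ∈ (Finset.range (N - 1)).attach,
    if s ⟨n.1, by have := Finset.mem_range.mp n.2; omega⟩ =
       s ⟨n.1 + 1, by have := Finset.mem_range.mp n.2; omega⟩ then 1 else -1

lemma mulVec_H0 (N : ℕ) (v : (Fin N → Bool) → ℂ) (s : Fin N → Bool) :
    (IsingH0 N).mulVec v s = dval N s * v s := by
  unfold IsingH0 dval
  have hs : (∑ n ∈ (Finset.range (N - 1)).attach,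
      Zop N ⟨n.1, by have := Finset.mem_range.mp n.2; omega⟩ *
      Zop N ⟨n.1 + 1, by have := Finset.mem_range.mp n.2; omega⟩).mulVec v
      = ∑ n ∈ (Finset.range (N - 1)).attach,
        (Zop N ⟨n.1, by have := Finset.mem_range.mp n.2; omega⟩ *
         Zop N ⟨n.1 + 1, by have := Finset.mem_range.mp n.2; omega⟩).mulVec v := by
    induction ((Finset.range (N - 1)).attach) using Finset.induction_on with
    | empty => simp [Matrix.mulVec]
    | insert _ _ h ih => simp_all [Finset.sum_insert h, Matrix.add_mulVec]
  rw [hs, Finset.sum_apply, Finset.sum_mul]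
  refine Finset.sum_congr rfl ?_
  intro n _
  rw [Zop, Zop, Matrix.diagonal_mul_diagonal, Matrix.mulVec_diagonal]
  congr 1
  set i : Fin N := ⟨n.1, by have := Finset.mem_range.mp n.2; omega⟩
  set j : Fin N := ⟨n.1 + 1, by have := Finset.mem_range.mp n.2; omega⟩
  cases h1 : s i <;> cases h2 : s j <;> simp [h1, h2]

lemma dval_eq_iff (N : ℕ) (hN : 2 ≤ N) (s : Fin N → Bool) :
    dval N s = -((N : ℂ) - 1) ↔
      ∀ m (hm : m + 1 < N), s ⟨m, by omega⟩ ≠ s ⟨m + 1, hm⟩ := by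
  have hcast : ((N - 1 : ℕ) : ℂ) = (N : ℂ) - 1 := by
    have : (1 : ℕ) ≤ N := by omega
    push_cast [this]; ring
  have key : dval N s =
      2 * ((Finset.range (N - 1)).attach.filter (fun n =>
        s ⟨n.1, by have := Finset.mem_range.mp n.2; omega⟩ =
        s ⟨n.1 + 1, by have := Finset.mem_range.mp n.2; omega⟩)).card - ((N : ℂ) - 1) := by
    unfold dval
    have : ∀ n ∈ (Finset.range (N - 1)).attach,
        (if s ⟨n.1, by have := Finset.mem_range.mp n.2; omega⟩ =
            s ⟨n.1 + 1, by have := Finset.mem_range.mp n.2; omega⟩ then (1:ℂ) else -1)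
        = (if s ⟨n.1, by have := Finset.mem_range.mp n.2; omega⟩ =
            s ⟨n.1 + 1, by have := Finset.mem_range.mp n.2; omega⟩ then (2:ℂ) else 0) - 1 := by
      intro n _; split_ifs <;> ring
    rw [Finset.sum_congr rfl this, Finset.sum_sub_distrib, Finset.sum_ite,
      Finset.sum_const, Finset.sum_const, Finset.sum_const, Finset.card_attach,
      Finset.card_range]
    simp only [nsmul_eq_mul, mul_zero, mul_one, add_zero]
    push_cast [hcast]
    ring
  rw [key]
  constructor
  · intro h m hm
    have hc : (((Finset.range (N - 1)).attach.filter (fun n =>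
        s ⟨n.1, by have := Finset.mem_range.mp n.2; omega⟩ =
        s ⟨n.1 + 1, by have := Finset.mem_range.mp n.2; omega⟩)).card : ℂ) = 0 := by
      have h2 : (2 : ℂ) * (((Finset.range (N - 1)).attach.filter (fun n =>
          s ⟨n.1, by have := Finset.mem_range.mp n.2; omega⟩ =
          s ⟨n.1 + 1, by have := Finset.mem_range.mp n.2; omega⟩)).card : ℂ) = 0 := by
        linear_combination h
      have h3 := mul_eq_zero.mp h2
      rcases h3 with h3 | h3
      · exact absurd h3 two_ne_zero
      · exact h3
    have hc0 : ((Finset.range (N - 1)).attach.filter (fun n =>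
        s ⟨n.1, by have := Finset.mem_range.mp n.2; omega⟩ =
        s ⟨n.1 + 1, by have := Finset.mem_range.mp n.2; omega⟩)).card = 0 := by
      exact_mod_cast hc
    rw [Finset.card_eq_zero, Finset.filter_eq_empty_iff] at hc0
    intro heq
    exact hc0 (Finset.mem_attach _ ⟨m, Finset.mem_range.mpr (by omega)⟩) heq
  · intro h
    have : (Finset.range (N - 1)).attach.filter (fun n =>
        s ⟨n.1, by have := Finset.mem_range.mp n.2; omega⟩ =
        s ⟨n.1 + 1, by have := Finset.mem_range.mp n.2; omega⟩) = ∅ := by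
      rw [Finset.filter_eq_empty_iff]
      intro n _
      exact h n.1 (by have := Finset.mem_range.mp n.2; omega)
    rw [this]
    simp

lemma alt_adj (N : ℕ) : ∀ m (hm : m + 1 < N),
    alt N ⟨m, by omega⟩ ≠ alt N ⟨m + 1, hm⟩ := by
  intro m hm
  simp only [alt, ne_eq, decide_eq_decide]
  omega

lemma nalt_adj (N : ℕ) : ∀ m (hm : m + 1 < N),
    (fun n => !(alt N n)) ⟨m, by omega⟩ ≠ (fun n => !(alt N n)) ⟨m + 1, hm⟩ := by
  intro m hm
  exact fun hh => alt_adj N m hm (by simpa using hh)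

lemma adj_struct (N : ℕ) (hN : 2 ≤ N) (s : Fin N → Bool)
    (h : ∀ m (hm : m + 1 < N), s ⟨m, by omega⟩ ≠ s ⟨m + 1, hm⟩) :
    s = alt N ∨ s = (fun n => !(alt N n)) := by
  have h0 : (0 : ℕ) < N := by omega
  have key : ∀ m (hm : m < N),
      s ⟨m, hm⟩ = xor (s ⟨0, h0⟩) (decide (m % 2 = 1)) := by
    intro m
    induction m with
    | zero => intro hm; simp
    | succ k ih =>
      intro hm
      have h1 := h k hm
      have h2 := ih (by omega)
      have h3 : s ⟨k + 1, hm⟩ = !s ⟨k, by omega⟩ := by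
        cases hk : s ⟨k, by omega⟩ <;> cases hk1 : s ⟨k + 1, hm⟩ <;> simp_all
      rw [h3, h2]
      have h4 : decide ((k + 1) % 2 = 1) = !decide (k % 2 = 1) := by
        rcases Nat.mod_two_eq_zero_or_one k with hp | hp
        · have : (k + 1) % 2 = 1 := by omega
          simp [this, hp]
        · have : (k + 1) % 2 = 0 := by omega
          simp [this, hp]
      rw [h4]
      cases s ⟨0, h0⟩ <;> cases decide (k % 2 = 1) <;> rfl
  cases hs0 : s ⟨0, h0⟩ with
  | false =>
    left; funext n
    have := key n.1 n.2
    rw [Fin.eta] at this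
    rw [this, hs0, alt]
    simp
  | true =>
    right; funext n
    have := key n.1 n.2
    rw [Fin.eta] at this
    rw [this, hs0, alt]
    simp

lemma alt_ne (N : ℕ) (hN : 2 ≤ N) : alt N ≠ (fun n => !(alt N n)) := by
  intro h
  have := congrFun h ⟨0, by omega⟩
  simp [alt] at this

/-- For every `N ≥ 2`, the eigenspace of `H0` for its smallest eigenvalue `−(N − 1)` is
exactly the two-dimensional span of the two Néel states `e a` and `e a'`. -/
theorem isingH0_bottom_eigenspace (N : ℕ) (hN : 2 ≤ N) (v : (Fin N → Bool) → ℂ) :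
    (IsingH0 N).mulVec v = (-((N : ℂ) - 1)) • v ↔
      v ∈ Submodule.span ℂ ({e (alt N), e (fun n => !(alt N n))} :
        Set ((Fin N → Bool) → ℂ)) := by
  have hmem : v ∈ Submodule.span ℂ ({e (alt N), e (fun n => !(alt N n))} :
      Set ((Fin N → Bool) → ℂ)) ↔
      ∀ s, s ≠ alt N → s ≠ (fun n => !(alt N n)) → v s = 0 := by
    rw [Submodule.mem_span_pair]
    constructor
    · rintro ⟨a, b, rfl⟩ s hs1 hs2
      simp [e, Pi.single_eq_of_ne hs1, Pi.single_eq_of_ne hs2]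
    · intro h
      refine ⟨v (alt N), v (fun n => !(alt N n)), ?_⟩
      funext s
      by_cases hs1 : s = alt N
      · subst hs1
        simp [e, Pi.single_eq_of_ne (alt_ne N hN), Pi.single_eq_same]
      · by_cases hs2 : s = (fun n => !(alt N n))
        · subst hs2
          simp [e, Pi.single_eq_of_ne (Ne.symm (alt_ne N hN)), Pi.single_eq_same]
        · simp [e, Pi.single_eq_of_ne hs1, Pi.single_eq_of_ne hs2, h s hs1 hs2]
  rw [hmem, funext_iff]
  have heq : ∀ s, (IsingH0 N).mulVec v s = ((-((N : ℂ) - 1)) • v) s ↔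
      dval N s * v s = (-((N : ℂ) - 1)) * v s := by
    intro s; rw [mulVec_H0]; simp
  constructor
  · intro h s hs1 hs2
    have hd : dval N s ≠ -((N : ℂ) - 1) := by
      intro hd
      rcases adj_struct N hN s ((dval_eq_iff N hN s).mp hd) with h' | h'
      · exact hs1 h'
      · exact hs2 h'
    have := (heq s).mp (h s)
    have hz : (dval N s - (-((N : ℂ) - 1))) * v s = 0 := by ring_nf; linear_combination this
    rcases mul_eq_zero.mp hz with h' | h'
    · exact absurd (by linear_combination h') hd
    · exact h'
  · intro h s
    rw [heq]
    by_cases hs1 : s = alt N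
    · subst hs1
      rw [(dval_eq_iff N hN _).mpr (alt_adj N)]
    · by_cases hs2 : s = (fun n => !(alt N n))
      · subst hs2
        rw [(dval_eq_iff N hN _).mpr (nalt_adj N)]
      · rw [h s hs1 hs2]; ring
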